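/- arXiv:2102.10282 — 9 statements merged into one kernel-verified Lean document; each statement's English description precedes it below -/
import Mathlib

section
/- Let f : X → X be a function on a set X, and let T be a cross-section of ker(f) (a set of representatives of the fibers of f). Then f is unit-regular in the monoid of all functions X → X under composition (i.e., there exists a bijection g : X → X with f ∘ g ∘ f = f, in right-action composition fgf = f) if and only if f is semi-balanced, meaning |X \ T| = |X \ f(X)| for some (equivalently any) cross-section T of ker(f). -/
/-- `f ∈ T(X)` is unit-regular (there is a permutation `g` with `fgf = f`)
iff `f` is semi-balanced, i.e. the collapse `|X \ T|` (for a cross-section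
`T` of `ker f`) equals the defect `|X \ im f|`. -/
theorem stmt_1 {X : Type*} (f : X → X) (T : Set X)
    (hT : ∀ x : X, ∃! t, t ∈ T ∧ f t = f x) :
    (∃ g : X ≃ X, ∀ x, f (g (f x)) = f x) ↔
      Cardinal.mk ↥(Set.univ \ T) = Cardinal.mk ↥(Set.univ \ Set.range f) := by
  classical
  set τ : X → X := fun x => (hT x).choose with hτdef
  have hτT : ∀ x, τ x ∈ T := fun x => (hT x).choose_spec.1.1
  have hτf : ∀ x, f (τ x) = f x := fun x => (hT x).choose_spec.1.2
  have hτu : ∀ x s, s ∈ T → f s = f x → s = τ x := fun x s hs hfs =>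
    (hT x).choose_spec.2 s ⟨hs, hfs⟩
  have hτfix : ∀ x ∈ T, τ x = x := fun x hx => (hτu x x hx rfl).symm
  constructor
  · rintro ⟨g, hg⟩
    set T' : Set X := Set.range (fun z => g (f z)) with hT'def
    have hT'fix : ∀ x ∈ T', g (f x) = x := by
      rintro x ⟨z, rfl⟩
      simp only [hg]
    have hmemT' : ∀ x, g (f x) ∈ T' := fun x => ⟨x, rfl⟩
    set σ : X → X := fun x => if x ∈ T' then τ x else if x ∈ T then g (f x) else x
      with hσdef
    have hσ : Function.Involutive σ := by
      intro x
      by_cases h1 : x ∈ T'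
      · have hx : g (f x) = x := hT'fix x h1
        simp only [hσdef, if_pos h1]
        by_cases h2 : τ x ∈ T'
        · have heq : τ x = x := by
            have h3 : g (f (τ x)) = τ x := hT'fix _ h2
            rw [hτf, hx] at h3
            exact h3.symm
          rw [heq, if_pos h1, heq]
        · rw [if_neg h2, if_pos (hτT x), hτf, hx]
      · by_cases h2 : x ∈ T
        · simp only [hσdef, if_neg h1, if_pos h2, if_pos (hmemT' x)]
          have : τ (g (f x)) = τ x := by
            refine (hτu x _ (hτT _) ?_).symm ▸ rfl
            rw [hτf, hg]
          rw [this, hτfix x h2]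
        · simp only [hσdef, if_neg h1, if_neg h2]
    set G : X ≃ X := g.trans (Function.Involutive.toPerm σ hσ) with hGdef
    have hGapp : ∀ x, G x = σ (g x) := fun x => rfl
    have himg : (G : X → X) '' (Set.range f) = T := by
      ext t
      constructor
      · rintro ⟨y, ⟨x, rfl⟩, rfl⟩
        rw [hGapp]
        have h1 : g (f x) ∈ T' := hmemT' x
        simp only [hσdef, if_pos h1]
        exact hτT _
      · intro ht
        refine ⟨f t, ⟨t, rfl⟩, ?_⟩
        rw [hGapp]
        have h1 : g (f t) ∈ T' := hmemT' t
        simp only [hσdef, if_pos h1]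
        have : τ (g (f t)) = τ t := by
          refine (hτu t _ (hτT _) ?_).symm ▸ rfl
          rw [hτf, hg]
        rw [this, hτfix t ht]
    have hdiff : (G : X → X) '' (Set.univ \ Set.range f) = Set.univ \ T := by
      rw [Set.image_diff G.injective, Set.image_univ, Equiv.range_eq_univ, himg]
    rw [← hdiff, Cardinal.mk_image_eq G.injective]
  · intro h
    obtain ⟨e⟩ := Cardinal.eq.mp h
    have hcT : (Set.univ \ T) = Tᶜ := by
      rw [Set.compl_eq_univ_diff]
    have hcR : (Set.univ \ Set.range f) = (Set.range f)ᶜ := by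
      rw [Set.compl_eq_univ_diff]
    set e1 : ↥T ≃ ↥(Set.range f) :=
      Equiv.ofBijective (fun t : T => ⟨f t, Set.mem_range_self (t : X)⟩) (by
        constructor
        · rintro ⟨a, ha⟩ ⟨b, hb⟩ hab
          have : f a = f b := congrArg Subtype.val hab
          have h1 := hτu a b hb this.symm
          rw [hτfix a ha] at h1
          exact Subtype.ext h1.symm
        · rintro ⟨y, x, rfl⟩
          exact ⟨⟨τ x, hτT x⟩, Subtype.ext (hτf x)⟩) with he1
    set e2 : ↥(Set.range f)ᶜ ≃ ↥Tᶜ :=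
      ((Equiv.setCongr hcR).symm.trans e.symm).trans (Equiv.setCongr hcT) with he2
    set g : X ≃ X := (Equiv.Set.sumCompl (Set.range f)).symm.trans
      ((Equiv.sumCongr e1.symm e2).trans (Equiv.Set.sumCompl T)) with hgdef
    refine ⟨g, fun x => ?_⟩
    have h1 : (Equiv.Set.sumCompl (Set.range f)).symm (f x) =
        Sum.inl ⟨f x, Set.mem_range_self x⟩ :=
      Equiv.Set.sumCompl_symm_apply_of_mem (Set.mem_range_self x)
    have h2 : g (f x) = ((e1.symm ⟨f x, Set.mem_range_self x⟩ : T) : X) := by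
      rw [hgdef]
      simp only [Equiv.trans_apply, h1, Equiv.sumCongr_apply, Sum.map_inl,
        Equiv.Set.sumCompl_apply_inl]
    rw [h2]
    have h3 : e1 (e1.symm ⟨f x, Set.mem_range_self x⟩) = ⟨f x, Set.mem_range_self x⟩ :=
      e1.apply_symm_apply _
    have h4 := congrArg Subtype.val h3
    exact h4
end

section
/- Every self-map of a set X is semi-balanced (i.e., c(f) = d(f) for all f : X → X) if and only if X is finite. -/
/-- Every self-map of `X` is semi-balanced (collapse equals defect) iff `X`
is finite. -/
theorem stmt_3 {X : Type*} :
    (∀ f : X → X, ∀ T : Set X, (∀ x : X, ∃! t, t ∈ T ∧ f t = f x) →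
        Cardinal.mk ↥(Set.univ \ T) = Cardinal.mk ↥(Set.univ \ Set.range f)) ↔
      Finite X := by
  constructor
  · intro h
    by_contra hinf
    rw [not_finite_iff_infinite] at hinf
    have hcard : Cardinal.mk (Option X) = Cardinal.mk X := by
      simp [Cardinal.mk_option, Cardinal.add_one_of_aleph0_le (Cardinal.aleph0_le_mk X)]
    obtain ⟨g⟩ := Cardinal.eq.1 hcard
    set f : X → X := fun x => g (some x) with hf
    have hfi : Function.Injective f := fun a b hab => by
      simpa using g.injective hab
    have hsec : ∀ x : X, ∃! t, t ∈ (Set.univ : Set X) ∧ f t = f x := by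
      intro x
      exact ⟨x, ⟨trivial, rfl⟩, fun y hy => hfi hy.2⟩
    have h0 := h f Set.univ hsec
    rw [Set.diff_self] at h0
    simp only [Cardinal.mk_emptyCollection] at h0
    have hmem : g none ∈ Set.univ \ Set.range f := by
      refine ⟨trivial, ?_⟩
      rintro ⟨x, hx⟩
      exact (Option.some_ne_none x) (g.injective hx)
    have hne : Cardinal.mk ↥(Set.univ \ Set.range f) ≠ 0 := by
      rw [Cardinal.mk_ne_zero_iff]
      exact ⟨⟨_, hmem⟩⟩
    exact hne h0.symm
  · intro hfin f T hT
    classical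
    have hinj : ∀ t₁ ∈ T, ∀ t₂ ∈ T, f t₁ = f t₂ → t₁ = t₂ := by
      intro t₁ h₁ t₂ h₂ he
      obtain ⟨t, _, hu⟩ := hT t₁
      exact ((hu t₁ ⟨h₁, rfl⟩).trans (hu t₂ ⟨h₂, he.symm⟩).symm)
    have e : ↥T ≃ ↥(Set.range f) := by
      refine Equiv.ofBijective (fun t => ⟨f t, t, rfl⟩) ⟨?_, ?_⟩
      · rintro ⟨t₁, h₁⟩ ⟨t₂, h₂⟩ he
        simp only [Subtype.mk.injEq] at he ⊢
        exact hinj t₁ h₁ t₂ h₂ (congrArg Subtype.val he)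
      · rintro ⟨y, x, rfl⟩
        obtain ⟨t, ⟨htT, hft⟩, _⟩ := hT x
        exact ⟨⟨t, htT⟩, Subtype.ext hft⟩
    -- Nat.card equalities
    have h1 : Nat.card ↥T = Nat.card ↥(Set.range f) := Nat.card_congr e
    have key : Nat.card ↥(Set.univ \ T) = Nat.card ↥(Set.univ \ Set.range f) := by
      rw [← Set.compl_eq_univ_diff, ← Set.compl_eq_univ_diff]
      have hc1 := Set.ncard_add_ncard_compl T (Set.toFinite T)
      have hc2 := Set.ncard_add_ncard_compl (Set.range f) (Set.toFinite _)
      rw [Nat.card_coe_set_eq, Nat.card_coe_set_eq]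
      have : T.ncard = (Set.range f).ncard := by
        rw [← Nat.card_coe_set_eq, ← Nat.card_coe_set_eq]; exact h1
      omega
    -- lift to Cardinal via toNat injectivity on finite cardinals
    have fin1 : Cardinal.mk ↥(Set.univ \ T) < Cardinal.aleph0 := Cardinal.lt_aleph0_of_finite _
    have fin2 : Cardinal.mk ↥(Set.univ \ Set.range f) < Cardinal.aleph0 := Cardinal.lt_aleph0_of_finite _
    exact Cardinal.toNat_injOn fin1 fin2 key
end

section
/- The full transformation monoid T(X) on a set X is unit-regular (every element f satisfies f = f g f for some permutation g of X) if and only if X is finite. -/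
/-- The full transformation monoid `T(X)` is unit-regular iff `X` is finite. -/
theorem stmt_4 {X : Type*} :
    (∀ f : X → X, ∃ g : X ≃ X, ∀ x, f (g (f x)) = f x) ↔ Finite X := by
  classical
  constructor
  · intro h
    by_contra hfin
    rw [not_finite_iff_infinite] at hfin
    set e := Infinite.natEmbedding X with he
    set f : X → X := fun x => if hx : ∃ n, e n = x then e (hx.choose - 1) else x with hf
    have key : ∀ n, f (e n) = e (n - 1) := by
      intro n
      have hx : ∃ m, e m = e n := ⟨n, rfl⟩
      have : hx.choose = n := e.injective hx.choose_spec
      simp [hf, dif_pos hx, this]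
    have hsurj : Function.Surjective f := by
      intro x
      by_cases hx : ∃ n, e n = x
      · obtain ⟨n, rfl⟩ := hx
        exact ⟨e (n + 1), by simpa using key (n + 1)⟩
      · exact ⟨x, by simp [hf, dif_neg hx]⟩
    obtain ⟨g, hg⟩ := h f
    have hfg : ∀ y, f (g y) = y := by
      intro y
      obtain ⟨x, rfl⟩ := hsurj y
      exact hg x
    have hfeq : ∀ x, f x = g.symm x := by
      intro x
      conv_lhs => rw [← g.apply_symm_apply x]
      exact hfg (g.symm x)
    have h01 : f (e 0) = f (e 1) := by rw [key 0, key 1]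
    have : e 0 = e 1 := g.symm.injective (by rw [← hfeq, ← hfeq, h01])
    exact absurd (e.injective this) (by simp)
  · intro hfin f
    haveI := Fintype.ofFinite X
    set s : Set.range f → X := fun y => y.2.choose with hs
    have hsspec : ∀ y : Set.range f, f (s y) = y := fun y => y.2.choose_spec
    have hsinj : Function.Injective s := by
      intro a b hab
      apply Subtype.ext
      rw [← hsspec a, ← hsspec b, hab]
    let e1 : {x // x ∈ Set.range f} ≃ {x // x ∈ Set.range s} :=
      Equiv.ofInjective s hsinj
    refine ⟨e1.extendSubtype, fun x => ?_⟩
    have hx : f x ∈ Set.range f := ⟨x, rfl⟩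
    rw [e1.extendSubtype_apply_of_mem (f x) hx]
    exact hsspec ⟨f x, hx⟩
end

section
/- Let X be a finite set and f : X → X. The number of permutations g of X satisfying f ∘ g ∘ f = f (written fgf = f in right-action composition) equals d(f)! · ∏_{y ∈ im(f)} |f⁻¹({y})|, where d(f) = |X \ im(f)|. -/
open scoped BigOperators

open Equiv Function in
private lemma card_extensions {α : Type*} [Fintype α] [DecidableEq α] (p : α → Prop)
    [DecidablePred p] (u : {x // p x} → α) (hu : Function.Injective u) :
    Nat.card {g : Equiv.Perm α // ∀ x : {x // p x}, g x = u x} =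
      (Fintype.card α - Fintype.card {x // p x}).factorial := by
  classical
  have hur : ∀ {x : α}, ¬ p x → (g : Equiv.Perm α) → (∀ y : {x // p x}, g y = u y) →
      g x ∉ Set.range u := by
    intro x hx g hg ⟨y, hy⟩
    rw [← hg y] at hy
    exact hx (g.injective hy ▸ y.2)
  let E : {g : Equiv.Perm α // ∀ x : {x // p x}, g x = u x} ≃
      ({x // ¬ p x} ≃ {x : α // x ∉ Set.range u}) :=
    { toFun := fun ⟨g, hg⟩ =>
        { toFun := fun x => ⟨g x, hur x.2 g hg⟩
          invFun := fun y => ⟨g.symm y, by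
            intro hp
            have : g (g.symm y) = u ⟨g.symm y, hp⟩ := hg ⟨g.symm (y : α), hp⟩
            rw [Equiv.apply_symm_apply] at this
            exact y.2 ⟨_, this.symm⟩⟩
          left_inv := fun x => by simp
          right_inv := fun y => by simp }
      invFun := fun e =>
        ⟨((Equiv.sumCompl p).symm.trans
          (((Equiv.ofInjective u hu).sumCongr e).trans
            (Equiv.sumCompl (· ∈ Set.range u)))), by
          intro x
          simp [Equiv.sumCompl_symm_apply_of_pos x.2, Equiv.ofInjective] ⟩
      left_inv := by
        rintro ⟨g, hg⟩
        ext x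
        by_cases hx : p x
        · simp [Equiv.sumCompl_symm_apply_of_pos hx, Equiv.ofInjective, hg ⟨x, hx⟩]
        · simp [Equiv.sumCompl_symm_apply_of_neg hx]
      right_inv := by
        intro e
        ext x
        simp [Equiv.sumCompl_symm_apply_of_neg x.2] }
  rw [Nat.card_eq_fintype_card, Fintype.card_congr E]
  have hcard : Fintype.card {x : α // x ∉ Set.range u} = Fintype.card {x // ¬ p x} := by
    have h1 : Fintype.card {x : α // x ∈ Set.range u} = Fintype.card {x // p x} :=
      (Fintype.card_congr (Equiv.ofInjective u hu)).symm
    have := Fintype.card_subtype_compl (fun x => x ∈ Set.range u) (α := α)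
    have := Fintype.card_subtype_compl p (α := α)
    omega
  rw [Fintype.card_equiv (Fintype.equivOfCardEq hcard).symm,
    Fintype.card_subtype_compl]

/-- For finite `X` and `f : X → X`, the number of permutations `g` with
`fgf = f` equals `d(f)! · ∏_{y ∈ im f} |f⁻¹(y)|`. -/
theorem stmt_5 {X : Type*} [Fintype X] [DecidableEq X] (f : X → X) :
    Nat.card {g : Equiv.Perm X // ∀ x, f (g (f x)) = f x} =
      (Nat.card ↥(Set.univ \ Set.range f)).factorial *
        ∏ y ∈ Finset.univ.image f, (Finset.univ.filter fun x => f x = y).card := by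
  classical
  set p : X → Prop := fun y => y ∈ Set.range f with hp
  -- reformulate the condition
  have hcond : ∀ g : Equiv.Perm X,
      (∀ x, f (g (f x)) = f x) ↔ ∀ y : {y // p y}, f (g y) = y := by
    intro g
    constructor
    · rintro h ⟨y, x, rfl⟩; exact h x
    · intro h x; exact h ⟨f x, x, rfl⟩
  -- the fibration map
  let Φ : {g : Equiv.Perm X // ∀ x, f (g (f x)) = f x} →
      (∀ y : {y // p y}, {x // f x = (y : X)}) :=
    fun g y => ⟨(g : Equiv.Perm X) y, ((hcond g).1 g.2) y⟩
  have key : Nat.card {g : Equiv.Perm X // ∀ x, f (g (f x)) = f x} =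
      Fintype.card (∀ y : {y // p y}, {x // f x = (y : X)}) *
        (Fintype.card X - Fintype.card {y // p y}).factorial := by
    rw [Nat.card_eq_fintype_card, ← Fintype.card_congr (Equiv.sigmaFiberEquiv Φ),
      Fintype.card_sigma]
    rw [Finset.sum_congr rfl (fun h _ => ?_), Finset.sum_const, Finset.card_univ, smul_eq_mul]
    -- fiber over h has cardinality (n - |S|)!
    have hinj : Function.Injective (fun y : {y // p y} => ((h y : X))) := by
      intro y₁ y₂ hy
      have h1 := (h y₁).2
      have h2 := (h y₂).2
      apply Subtype.ext
      simp only at hy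
      rw [← h1, ← h2, hy]
    have := card_extensions p (fun y => ((h y : X))) hinj
    have hfix : @Fintype.card {x // p x} (Subtype.fintype p) = Fintype.card {y // p y} := by
      congr!
    rw [hfix] at this
    refine Nat.card_eq_fintype_card.symm.trans (Eq.trans ?_ this)
    apply Nat.card_congr
    exact
      { toFun := fun g => ⟨g.1.1, fun y => congrArg Subtype.val (congrFun g.2 y)⟩
        invFun := fun g => ⟨⟨g.1, (hcond g.1).2 fun y => by
            rw [g.2 y]; exact (h y).2⟩, by
          funext y; exact Subtype.ext (g.2 y)⟩
        left_inv := fun g => by ext1; ext1; rfl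
        right_inv := fun g => by ext1; rfl }
  rw [key, mul_comm]
  congr 1
  · -- d! part
    congr 1
    have e1 : Nat.card ↥(Set.univ \ Set.range f) = Fintype.card {x : X // ¬ p x} := by
      rw [Nat.card_eq_fintype_card]
      exact Fintype.card_congr (Equiv.subtypeEquivRight (by simp [hp]))
    rw [e1, Fintype.card_subtype_compl]
  · -- product part
    rw [Fintype.card_pi]
    have e2 : ∀ y, (Finset.univ.filter fun x => f x = y).card = Fintype.card {x // f x = y} :=
      fun y => (Fintype.card_subtype _).symm
    simp_rw [e2]
    exact (Finset.prod_subtype (Finset.univ.image f) (by simp [hp, eq_comm])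
      (fun y => Fintype.card {x // f x = y})).symm
end

section
/- Let 𝒫 = {X_i : i ∈ I} be a partition of X. If f is unit-regular in T(X,𝒫), i.e., f = f g f for some unit g of T(X,𝒫), then the character χ^(f) : I → I is unit-regular in T(I), i.e., χ^(f) = χ^(f) ∘' σ ∘' χ^(f) for some permutation σ of I (where ∘' denotes right-action composition). -/
/-- `B` is a partition of `X` into nonempty pairwise disjoint blocks. -/
def IsBlockPartition {X I : Type*} (B : I → Set X) : Prop :=
  (∀ i, (B i).Nonempty) ∧ (∀ i j, i ≠ j → Disjoint (B i) (B j)) ∧ ∀ x, ∃ i, x ∈ B i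

/-- `f` preserves the partition `B`: each block maps into some block. -/
def Preserves {X I : Type*} (B : I → Set X) (f : X → X) : Prop :=
  ∀ i, ∃ j, f '' B i ⊆ B j

/-- `f` is unit-regular in `T(X,𝒫)`: there is a unit `g` (a `𝒫`-preserving
bijection whose inverse preserves `𝒫`) with `fgf = f` (right-action
composition). -/
def URegP {X I : Type*} (B : I → Set X) (f : X → X) : Prop :=
  ∃ g : X ≃ X, Preserves B g ∧ Preserves B g.symm ∧ ∀ x, f (g (f x)) = f x

/-- The induced block map `f_i : X_i → X_j` has collapse equal to defect:
for some cross-section `T` of its kernel, `|X_i \ T| = |X_j \ f(X_i)|`. -/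
def BlockSemiBalanced {X I : Type*} (B : I → Set X) (f : X → X) (i j : I) : Prop :=
  ∃ T ⊆ B i, (∀ x ∈ B i, ∃! t, t ∈ T ∧ f t = f x) ∧
    Cardinal.mk ↥(B i \ T) = Cardinal.mk ↥(B j \ f '' B i)

/-- If `f` is unit-regular in `T(X,𝒫)`, then its character `χf` is
unit-regular in `T(I)`. -/
theorem stmt_12 {X I : Type*} (B : I → Set X) (hP : IsBlockPartition B)
    (f : X → X) (χf : I → I) (hχf : ∀ i, f '' B i ⊆ B (χf i))
    (h : URegP B f) :
    ∃ σ : I ≃ I, ∀ i, χf (σ (χf i)) = χf i := by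
  obtain ⟨hne, hdisj, -⟩ := hP
  obtain ⟨g, hg, hg', hfgf⟩ := h
  have uniq : ∀ {a b : I} {y : X}, y ∈ B a → y ∈ B b → a = b := by
    intro a b y ha hb
    by_contra hab
    exact (hdisj a b hab).ne_of_mem ha hb rfl
  choose σ hσ using hg
  choose τ hτ using hg'
  have hτσ : ∀ i, τ (σ i) = i := by
    intro i
    obtain ⟨x, hx⟩ := hne i
    have h1 : g x ∈ B (σ i) := hσ i ⟨x, hx, rfl⟩
    have h2 : g.symm (g x) ∈ B (τ (σ i)) := hτ (σ i) ⟨g x, h1, rfl⟩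
    rw [g.symm_apply_apply] at h2
    exact uniq h2 hx
  have hστ : ∀ i, σ (τ i) = i := by
    intro i
    obtain ⟨x, hx⟩ := hne i
    have h1 : g.symm x ∈ B (τ i) := hτ i ⟨x, hx, rfl⟩
    have h2 : g (g.symm x) ∈ B (σ (τ i)) := hσ (τ i) ⟨g.symm x, h1, rfl⟩
    rw [g.apply_symm_apply] at h2
    exact uniq h2 hx
  refine ⟨⟨σ, τ, hτσ, hστ⟩, fun i => ?_⟩
  obtain ⟨x, hx⟩ := hne i
  have h1 : f x ∈ B (χf i) := hχf i ⟨x, hx, rfl⟩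
  have h2 : g (f x) ∈ B (σ (χf i)) := hσ (χf i) ⟨f x, h1, rfl⟩
  have h3 : f (g (f x)) ∈ B (χf (σ (χf i))) := hχf _ ⟨g (f x), h2, rfl⟩
  rw [hfgf x] at h3
  exact uniq h3 h1
end

section
/- Let 𝒫 = {X_i : i ∈ I} be a partition of X and let Σ(X,𝒫) = {f ∈ T(X,𝒫) : f(X) ∩ X_i ≠ ∅ for all i ∈ I}. Then f ∈ Σ(X,𝒫) is regular in Σ(X,𝒫) (f = f g f for some g ∈ Σ(X,𝒫)) if and only if χ^(f) is regular in the monoid Γ(I) of surjective self-maps of I; equivalently (since regular elements of Γ(I) are bijections), if and only if χ^(f) is a permutation of I. -/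
/-- `f ∈ Σ(X,𝒫)` is regular in `Σ(X,𝒫)` iff its character `χf` is regular
in the monoid `Γ(I)` of surjective self-maps of `I`, iff `χf` is a
permutation of `I`. -/
theorem stmt_14 {X I : Type*} (B : I → Set X) (hP : IsBlockPartition B)
    (f : X → X) (χf : I → I) (hχf : ∀ i, f '' B i ⊆ B (χf i))
    (hSig : ∀ i, (Set.range f ∩ B i).Nonempty) :
    ((∃ g : X → X, Preserves B g ∧ (∀ i, (Set.range g ∩ B i).Nonempty) ∧
          ∀ x, f (g (f x)) = f x) ↔
        ∃ h : I → I, Function.Surjective h ∧ ∀ i, χf (h (χf i)) = χf i) ∧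
      ((∃ g : X → X, Preserves B g ∧ (∀ i, (Set.range g ∩ B i).Nonempty) ∧
            ∀ x, f (g (f x)) = f x) ↔
          Function.Bijective χf) := by
  classical
  obtain ⟨hne, hdisj, hcov⟩ := hP
  have uniq : ∀ {x : X} {i j : I}, x ∈ B i → x ∈ B j → i = j := by
    intro x i j hi hj
    by_contra h
    exact (hdisj i j h).ne_of_mem hi hj rfl
  have hsurj : Function.Surjective χf := by
    intro i
    obtain ⟨y, ⟨x, rfl⟩, hy⟩ := hSig i
    obtain ⟨k, hk⟩ := hcov x
    exact ⟨k, uniq (hχf k ⟨x, hk, rfl⟩) hy⟩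
  have fwd : (∃ g : X → X, Preserves B g ∧ (∀ i, (Set.range g ∩ B i).Nonempty) ∧
      ∀ x, f (g (f x)) = f x) →
      ∃ h : I → I, Function.Surjective h ∧ ∀ i, χf (h (χf i)) = χf i := by
    rintro ⟨g, hgP, hgSig, hgf⟩
    choose χg hχg using hgP
    have hgsurj : Function.Surjective χg := by
      intro i
      obtain ⟨y, ⟨x, rfl⟩, hy⟩ := hgSig i
      obtain ⟨k, hk⟩ := hcov x
      exact ⟨k, uniq (hχg k ⟨x, hk, rfl⟩) hy⟩
    refine ⟨χg, hgsurj, fun i => ?_⟩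
    obtain ⟨x, hx⟩ := hne i
    have h1 : f x ∈ B (χf i) := hχf i ⟨x, hx, rfl⟩
    have h2 : g (f x) ∈ B (χg (χf i)) := hχg _ ⟨f x, h1, rfl⟩
    have h3 : f (g (f x)) ∈ B (χf (χg (χf i))) := hχf _ ⟨_, h2, rfl⟩
    rw [hgf x] at h3
    exact uniq h3 h1
  have AtoB : (∃ h : I → I, Function.Surjective h ∧ ∀ i, χf (h (χf i)) = χf i) →
      Function.Bijective χf := by
    rintro ⟨h, hhsurj, hh⟩
    have hid : ∀ j, χf (h j) = j := fun j => by
      obtain ⟨i, rfl⟩ := hsurj j; exact hh i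
    refine ⟨fun a b hab => ?_, hsurj⟩
    obtain ⟨a', rfl⟩ := hhsurj a
    obtain ⟨b', rfl⟩ := hhsurj b
    rw [hid a', hid b'] at hab
    rw [hab]
  have back : Function.Bijective χf → (∃ g : X → X, Preserves B g ∧
      (∀ i, (Set.range g ∩ B i).Nonempty) ∧ ∀ x, f (g (f x)) = f x) := by
    intro hbij
    set e := Equiv.ofBijective χf hbij with he
    let ix : X → I := fun x => (hcov x).choose
    have hix : ∀ x, x ∈ B (ix x) := fun x => (hcov x).choose_spec
    let g : X → X := fun y =>
      if hy : ∃ x, x ∈ B (e.symm (ix y)) ∧ f x = y then hy.choose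
      else (hne (e.symm (ix y))).choose
    have hgmem : ∀ y, g y ∈ B (e.symm (ix y)) := by
      intro y
      by_cases hy : ∃ x, x ∈ B (e.symm (ix y)) ∧ f x = y
      · simp only [g, dif_pos hy]; exact hy.choose_spec.1
      · simp only [g, dif_neg hy]; exact (hne _).choose_spec
    have key : ∀ x, ix (f x) = e (ix x) := by
      intro x
      have hfx : f x ∈ B (χf (ix x)) := hχf _ ⟨x, hix x, rfl⟩
      exact uniq (hix (f x)) hfx
    have hgf : ∀ x, f (g (f x)) = f x := by
      intro x
      have hy : ∃ x', x' ∈ B (e.symm (ix (f x))) ∧ f x' = f x := by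
        refine ⟨x, ?_, rfl⟩
        rw [key x, Equiv.symm_apply_apply]
        exact hix x
      simp only [g, dif_pos hy]
      exact hy.choose_spec.2
    refine ⟨g, ?_, ?_, hgf⟩
    · intro i
      refine ⟨e.symm i, ?_⟩
      rintro y ⟨z, hz, rfl⟩
      have hzi : ix z = i := uniq (hix z) hz
      rw [← hzi]
      exact hgmem z
    · intro i
      obtain ⟨x, hx⟩ := hne i
      refine ⟨g (f x), ⟨f x, rfl⟩, ?_⟩
      have hm := hgmem (f x)
      rwa [key x, Equiv.symm_apply_apply, uniq (hix x) hx] at hm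
  exact ⟨⟨fwd, fun hA => back (AtoB hA)⟩, ⟨fun hg => AtoB (fwd hg), back⟩⟩
end

section
/- Let 𝒫 = {X_i : i ∈ I} be a partition of X and f ∈ Σ(X,𝒫) = {f ∈ T(X,𝒫) : f(X) meets every block}. Then f is unit-regular in Σ(X,𝒫) if and only if (i) χ^(f) : I → I is injective, and (ii) whenever χ^(f)(i) = j we have |X_i| = |X_j| and c(f_i) = d(f_i), where f_i : X_i → X_j is the induced block map. -/
section AuxStmt15
open scoped Classical

variable {X : Type*}

/-- choice of kernel cross-section representative -/
noncomputable def secFun (f : X → X) (T : Set X) (y : X) : X :=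
  if h : ∃ t, t ∈ T ∧ f t = y then h.choose else y

theorem secFun_spec {f : X → X} {T : Set X} {y : X} (h : ∃! t, t ∈ T ∧ f t = y) :
    secFun f T y ∈ T ∧ f (secFun f T y) = y := by
  obtain ⟨t, ht, -⟩ := h
  have hex : ∃ t, t ∈ T ∧ f t = y := ⟨t, ht⟩
  simpa [secFun, dif_pos hex] using hex.choose_spec

theorem secFun_uniq {f : X → X} {T : Set X} {y t : X} (h : ∃! t, t ∈ T ∧ f t = y)
    (ht : t ∈ T) (hft : f t = y) : t = secFun f T y := by
  obtain ⟨t', ht', hu⟩ := h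
  rw [hu t ⟨ht, hft⟩, hu (secFun f T y) (secFun_spec ⟨t', ht', hu⟩)]

/-- piece together a bijection `C ≃ A` from a cross-section of `ker (f|A)` and a
bijection between the complements. -/
noncomputable def blockEquiv (f : X → X) (A C T : Set X) (hTA : T ⊆ A) (hfA : f '' A ⊆ C)
    (hcs : ∀ y ∈ f '' A, ∃! t, t ∈ T ∧ f t = y) (e : ↥(A \ T) ≃ ↥(C \ f '' A)) :
    ↥C ≃ ↥A where
  toFun y :=
    if h : (y : X) ∈ f '' A then ⟨secFun f T y, hTA (secFun_spec (hcs y h)).1⟩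
    else ⟨e.symm ⟨y, y.2, h⟩, (e.symm ⟨y, y.2, h⟩).2.1⟩
  invFun t :=
    if h : (t : X) ∈ T then ⟨f t, hfA ⟨t, t.2, rfl⟩⟩
    else ⟨e ⟨t, t.2, h⟩, (e ⟨t, t.2, h⟩).2.1⟩
  left_inv y := by
    by_cases h : (y : X) ∈ f '' A
    · have h1 := secFun_spec (hcs y h)
      simp only [dif_pos h, dif_pos h1.1]
      exact Subtype.ext h1.2
    · have hmem : (e.symm ⟨y, y.2, h⟩ : X) ∉ T := (e.symm ⟨y, y.2, h⟩).2.2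
      simp only [dif_neg h, dif_neg hmem]
      have h2 : (⟨(e.symm ⟨y, y.2, h⟩ : X), (e.symm ⟨y, y.2, h⟩).2.1, hmem⟩ : ↥(A \ T)) =
          e.symm ⟨y, y.2, h⟩ := Subtype.ext rfl
      exact Subtype.ext (by simp only [h2, Equiv.apply_symm_apply])
  right_inv t := by
    by_cases h : (t : X) ∈ T
    · have hft : f t ∈ f '' A := ⟨t, t.2, rfl⟩
      simp only [dif_pos h, dif_pos hft]
      exact Subtype.ext (secFun_uniq (hcs (f t) hft) h rfl).symm
    · have hmem : (e ⟨t, t.2, h⟩ : X) ∉ f '' A := (e ⟨t, t.2, h⟩).2.2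
      simp only [dif_neg h, dif_neg hmem]
      have h2 : (⟨(e ⟨t, t.2, h⟩ : X), (e ⟨t, t.2, h⟩).2.1, hmem⟩ : ↥(C \ f '' A)) =
          e ⟨t, t.2, h⟩ := Subtype.ext rfl
      exact Subtype.ext (by simp only [h2, Equiv.symm_apply_apply])

theorem blockEquiv_apply_of_mem (f : X → X) (A C T : Set X) (hTA : T ⊆ A) (hfA : f '' A ⊆ C)
    (hcs : ∀ y ∈ f '' A, ∃! t, t ∈ T ∧ f t = y) (e : ↥(A \ T) ≃ ↥(C \ f '' A))
    (y : ↥C) (h : (y : X) ∈ f '' A) :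
    (blockEquiv f A C T hTA hfA hcs e y : X) = secFun f T y := by
  simp only [blockEquiv, Equiv.coe_fn_mk, dif_pos h]

variable {I : Type*}

/-- sufficiency half -/
theorem urp_of (B : I → Set X) (hP : IsBlockPartition B) (f : X → X) (χf : I → I)
    (hχf : ∀ i, f '' B i ⊆ B (χf i)) (hbij : Function.Bijective χf)
    (T : I → Set X) (hTsub : ∀ i, T i ⊆ B i)
    (hcs : ∀ i, ∀ y ∈ f '' B i, ∃! t, t ∈ T i ∧ f t = y)
    (e : ∀ i, ↥(B i \ T i) ≃ ↥(B (χf i) \ f '' B i)) : URegP B f := by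
  classical
  obtain ⟨hne, hdisj, hcov⟩ := hP
  have huniq : ∀ {x : X} {i j : I}, x ∈ B i → x ∈ B j → i = j := by
    intro x i j hi hj
    by_contra h
    exact (Set.disjoint_left.mp (hdisj i j h)) hi hj
  choose blk hblk using hcov
  set σ := Equiv.ofBijective χf hbij with hσdef
  have hσ : ∀ i, σ i = χf i := fun _ => rfl
  have hmem : ∀ x : X, x ∈ B (χf (σ.symm (blk x))) := by
    intro x
    have h1 : χf (σ.symm (blk x)) = blk x := by
      rw [← hσ]; exact σ.apply_symm_apply (blk x)
    rw [h1]; exact hblk x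
  let ψ : ∀ i, ↥(B (χf i)) ≃ ↥(B i) := fun i =>
    blockEquiv f (B i) (B (χf i)) (T i) (hTsub i) (hχf i) (hcs i) (e i)
  have hψc : ∀ (i j : I), i = j → ∀ (x : X) (hx : x ∈ B (χf i)) (hx' : x ∈ B (χf j)),
      (ψ i ⟨x, hx⟩ : X) = (ψ j ⟨x, hx'⟩ : X) := by
    rintro i j rfl x hx hx'; rfl
  have hψc' : ∀ (i j : I), i = j → ∀ (x : X) (hx : x ∈ B i) (hx' : x ∈ B j),
      ((ψ i).symm ⟨x, hx⟩ : X) = ((ψ j).symm ⟨x, hx'⟩ : X) := by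
    rintro i j rfl x hx hx'; rfl
  let gto : X → X := fun x => (ψ (σ.symm (blk x)) ⟨x, hmem x⟩ : X)
  let gin : X → X := fun x => ((ψ (blk x)).symm ⟨x, hblk x⟩ : X)
  have hgto : ∀ {x : X} {i : I} (hx : x ∈ B (χf i)), gto x = (ψ i ⟨x, hx⟩ : X) := by
    intro x i hx
    have h2 : σ.symm (blk x) = i := by
      have h1 : blk x = χf i := huniq (hblk x) hx
      rw [h1, ← hσ]; exact σ.symm_apply_apply i
    exact hψc _ _ h2 x (hmem x) hx
  have hgin : ∀ {x : X} {i : I} (hx : x ∈ B i), gin x = ((ψ i).symm ⟨x, hx⟩ : X) := by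
    intro x i hx
    exact hψc' _ _ (huniq (hblk x) hx) x (hblk x) hx
  have hli : Function.LeftInverse gin gto := by
    intro x
    have hx : x ∈ B (χf (σ.symm (blk x))) := hmem x
    have h1 : gto x = (ψ (σ.symm (blk x)) ⟨x, hx⟩ : X) := hgto hx
    have h2 : gto x ∈ B (σ.symm (blk x)) := by
      rw [h1]; exact (ψ (σ.symm (blk x)) ⟨x, hx⟩).2
    rw [hgin h2]
    have h3 : (⟨gto x, h2⟩ : ↥(B (σ.symm (blk x)))) = ψ (σ.symm (blk x)) ⟨x, hx⟩ :=
      Subtype.ext h1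
    rw [h3, Equiv.symm_apply_apply]
  have hri : Function.RightInverse gin gto := by
    intro x
    have hx : x ∈ B (blk x) := hblk x
    have h1 : gin x = ((ψ (blk x)).symm ⟨x, hx⟩ : X) := hgin hx
    have h2 : gin x ∈ B (χf (blk x)) := by
      rw [h1]; exact ((ψ (blk x)).symm ⟨x, hx⟩).2
    rw [hgto h2]
    have h3 : (⟨gin x, h2⟩ : ↥(B (χf (blk x)))) = (ψ (blk x)).symm ⟨x, hx⟩ :=
      Subtype.ext h1
    rw [h3, Equiv.apply_symm_apply]
  refine ⟨⟨gto, gin, hli, hri⟩, ?_, ?_, ?_⟩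
  · intro j
    refine ⟨σ.symm j, ?_⟩
    rintro y ⟨x, hx, rfl⟩
    have hx' : x ∈ B (χf (σ.symm j)) := by
      have : χf (σ.symm j) = j := by rw [← hσ]; exact σ.apply_symm_apply j
      rw [this]; exact hx
    show gto x ∈ B (σ.symm j)
    rw [hgto hx']
    exact (ψ (σ.symm j) ⟨x, hx'⟩).2
  · intro i
    refine ⟨χf i, ?_⟩
    rintro y ⟨x, hx, rfl⟩
    show gin x ∈ B (χf i)
    rw [hgin hx]
    exact ((ψ i).symm ⟨x, hx⟩).2
  · intro x
    have hx : x ∈ B (blk x) := hblk x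
    have hfx : f x ∈ f '' B (blk x) := ⟨x, hx, rfl⟩
    have hfx' : f x ∈ B (χf (blk x)) := hχf _ hfx
    show f (gto (f x)) = f x
    rw [hgto hfx']
    have h4 : (ψ (blk x) ⟨f x, hfx'⟩ : X) = secFun f (T (blk x)) (f x) :=
      blockEquiv_apply_of_mem f _ _ _ _ _ _ _ ⟨f x, hfx'⟩ hfx
    rw [h4]
    exact (secFun_spec (hcs (blk x) (f x) hfx)).2

end AuxStmt15

/-- Characterization of unit-regular elements of `Σ(X,𝒫)` (whose units are
those of `T(X,𝒫)`). -/
theorem stmt_15 {X I : Type*} (B : I → Set X) (hP : IsBlockPartition B)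
    (f : X → X) (χf : I → I) (hχf : ∀ i, f '' B i ⊆ B (χf i))
    (hSig : ∀ i, (Set.range f ∩ B i).Nonempty) :
    URegP B f ↔
      Function.Injective χf ∧
        ∀ i, Cardinal.mk ↥(B i) = Cardinal.mk ↥(B (χf i)) ∧
          BlockSemiBalanced B f i (χf i) := by
  classical
  obtain ⟨hne, hdisj, hcov⟩ := hP
  have huniq : ∀ {x : X} {i j : I}, x ∈ B i → x ∈ B j → i = j := by
    intro x i j hi hj
    by_contra h
    exact (Set.disjoint_left.mp (hdisj i j h)) hi hj
  have hsurj : Function.Surjective χf := by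
    intro j
    obtain ⟨y, ⟨x, rfl⟩, hy⟩ := hSig j
    obtain ⟨i, hx⟩ := hcov x
    exact ⟨i, huniq (hχf i ⟨x, hx, rfl⟩) hy⟩
  constructor
  · rintro ⟨g, hg, hg', hfgf⟩
    choose χg hχg using hg
    choose χg' hχg' using hg'
    have hgg' : ∀ i, χg' (χg i) = i := by
      intro i
      obtain ⟨x, hx⟩ := hne i
      have h1 : g x ∈ B (χg i) := hχg i ⟨x, hx, rfl⟩
      have h2 : g.symm (g x) ∈ B (χg' (χg i)) := hχg' _ ⟨g x, h1, rfl⟩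
      rw [g.symm_apply_apply] at h2
      exact huniq h2 hx
    have hg'g : ∀ i, χg (χg' i) = i := by
      intro i
      obtain ⟨x, hx⟩ := hne i
      have h1 : g.symm x ∈ B (χg' i) := hχg' i ⟨x, hx, rfl⟩
      have h2 : g (g.symm x) ∈ B (χg (χg' i)) := hχg _ ⟨g.symm x, h1, rfl⟩
      rw [g.apply_symm_apply] at h2
      exact huniq h2 hx
    have hcomp : ∀ j, χf (χg j) = j := by
      intro j
      obtain ⟨i, rfl⟩ := hsurj j
      obtain ⟨x, hx⟩ := hne i
      have h1 : f x ∈ B (χf i) := hχf i ⟨x, hx, rfl⟩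
      have h2 : g (f x) ∈ B (χg (χf i)) := hχg _ ⟨f x, h1, rfl⟩
      have h3 : f (g (f x)) ∈ B (χf (χg (χf i))) := hχf _ ⟨_, h2, rfl⟩
      rw [hfgf x] at h3
      exact huniq h3 h1
    have hχfg' : ∀ j, χf j = χg' j := by
      intro j
      conv_lhs => rw [← hg'g j]
      rw [hcomp]
    have hinj : Function.Injective χf := by
      intro a b hab
      rw [hχfg' a, hχfg' b] at hab
      have := congrArg χg hab
      rwa [hg'g, hg'g] at this
    have hgf : ∀ i, χg (χf i) = i := by
      intro i; rw [hχfg', hg'g]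
    have hgB : ∀ i, g '' B (χf i) = B i := by
      intro i
      apply Set.Subset.antisymm
      · intro y hy
        have := hχg (χf i) hy
        rwa [hgf i] at this
      · intro x hx
        have h1 : g.symm x ∈ B (χg' i) := hχg' i ⟨x, hx, rfl⟩
        rw [← hχfg' i] at h1
        exact ⟨g.symm x, h1, g.apply_symm_apply x⟩
    refine ⟨hinj, fun i => ⟨?_, ?_⟩⟩
    · have h1 : Cardinal.mk ↥(B (χf i)) = Cardinal.mk ↥(g '' B (χf i)) :=
        Cardinal.mk_congr (Equiv.Set.image g (B (χf i)) g.injective)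
      rw [hgB i] at h1
      exact h1.symm
    · refine ⟨g '' (f '' B i), ?_, ?_, ?_⟩
      · have h1 : g '' (f '' B i) ⊆ g '' B (χf i) := Set.image_mono (hχf i)
        rwa [hgB i] at h1
      · intro x hx
        refine ⟨g (f x), ⟨⟨f x, ⟨x, hx, rfl⟩, rfl⟩, hfgf x⟩, ?_⟩
        rintro t ⟨⟨y, ⟨x', hx', rfl⟩, rfl⟩, hft⟩
        rw [hfgf x'] at hft
        rw [hft]
      · have h1 : g '' (B (χf i) \ f '' B i) = B i \ g '' (f '' B i) := by
          rw [Set.image_diff g.injective, hgB i]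
        have h2 : Cardinal.mk ↥(B (χf i) \ f '' B i) =
            Cardinal.mk ↥(g '' (B (χf i) \ f '' B i)) :=
          Cardinal.mk_congr (Equiv.Set.image g _ g.injective)
        rw [h1] at h2
        exact h2.symm
  · rintro ⟨hinj, hbl⟩
    have hcs0 := fun i => (hbl i).2
    choose T hTsub hTcs hTmk using hcs0
    have hcs : ∀ i, ∀ y ∈ f '' B i, ∃! t, t ∈ T i ∧ f t = y := by
      rintro i y ⟨x, hx, rfl⟩
      exact hTcs i x hx
    have e : ∀ i, ↥(B i \ T i) ≃ ↥(B (χf i) \ f '' B i) := fun i =>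
      Classical.choice (Cardinal.eq.mp (hTmk i))
    exact urp_of B ⟨hne, hdisj, hcov⟩ f χf hχf ⟨hinj, hsurj⟩ T hTsub hcs e
end

section
/- Let E be the equivalence relation induced by a partition 𝒫 = {X_i : i ∈ I} of X, and let T_{E*}(X) = {f : X → X : for all x,y, (x,y) ∈ E ⟺ (f(x),f(y)) ∈ E}. Then f ∈ T_{E*}(X) is unit-regular in T_{E*}(X) if and only if (i) χ^(f) : I → I is surjective (hence, since χ^(f) is automatically injective for f ∈ T_{E*}(X), a permutation of I), and (ii) whenever χ^(f)(i) = j we have |X_i| = |X_j| and c(f_i) = d(f_i) for the induced block map f_i : X_i → X_j. -/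
/-- Characterization of unit-regular elements of `T_{E*}(X)`, the monoid of
self-maps with `(x,y) ∈ E ↔ (f x, f y) ∈ E` for the equivalence `E`
induced by the partition (units are those of `T(X,𝒫)`). -/
theorem stmt_17 {X I : Type*} (B : I → Set X) (hP : IsBlockPartition B)
    (f : X → X) (χf : I → I) (hχf : ∀ i, f '' B i ⊆ B (χf i))
    (hE : ∀ x y : X, (∃ i, x ∈ B i ∧ y ∈ B i) ↔ ∃ i, f x ∈ B i ∧ f y ∈ B i) :
    URegP B f ↔
      Function.Surjective χf ∧
        ∀ i, Cardinal.mk ↥(B i) = Cardinal.mk ↥(B (χf i)) ∧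
          BlockSemiBalanced B f i (χf i) := by
  classical
  obtain ⟨hne, hdisj, hcov⟩ := hP
  -- uniqueness of blocks
  have blockEq : ∀ {x : X} {i j : I}, x ∈ B i → x ∈ B j → i = j := by
    intro x i j hxi hxj
    by_contra h
    exact Set.disjoint_left.mp (hdisj i j h) hxi hxj
  -- χf is injective
  have hinj : Function.Injective χf := by
    intro i j hij
    obtain ⟨x, hx⟩ := hne i
    obtain ⟨y, hy⟩ := hne j
    obtain ⟨k, hxk, hyk⟩ := (hE x y).mpr ⟨χf i, hχf i ⟨x, hx, rfl⟩, hij ▸ hχf j ⟨y, hy, rfl⟩⟩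
    exact (blockEq hxk hx).symm.trans (blockEq hyk hy)
  constructor
  · -- forward direction
    rintro ⟨g, hg, hg', hfgf⟩
    choose χg hχg using hg
    choose χg' hχg' using hg'
    have hgg : ∀ i, χg' (χg i) = i := by
      intro i
      obtain ⟨x, hx⟩ := hne i
      have h1 : g x ∈ B (χg i) := hχg i ⟨x, hx, rfl⟩
      have h2 : g.symm (g x) ∈ B (χg' (χg i)) := hχg' _ ⟨g x, h1, rfl⟩
      rw [Equiv.symm_apply_apply] at h2
      exact blockEq h2 hx
    have hginj : Function.Injective χg := by
      intro i j h
      rw [← hgg i, h, hgg]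
    have hgB : ∀ i, g '' B i = B (χg i) := by
      intro i
      apply Set.Subset.antisymm (hχg i)
      intro y hy
      have h2 : g.symm y ∈ B (χg' (χg i)) := hχg' _ ⟨y, hy, rfl⟩
      rw [hgg] at h2
      exact ⟨g.symm y, h2, g.apply_symm_apply y⟩
    have hcf : ∀ j, χg (χf j) = j := by
      intro j
      obtain ⟨x, hx⟩ := hne j
      have h1 : f x ∈ B (χf j) := hχf j ⟨x, hx, rfl⟩
      have h2 : g (f x) ∈ B (χg (χf j)) := hχg _ ⟨f x, h1, rfl⟩
      have h3 : f (g (f x)) ∈ B (χf (χg (χf j))) := hχf _ ⟨g (f x), h2, rfl⟩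
      rw [hfgf x] at h3
      exact hinj (blockEq h3 h1)
    have hsurj : Function.Surjective χf := by
      intro j
      refine ⟨χg j, hginj ?_⟩
      rw [hcf (χg j)]
    refine ⟨hsurj, fun i => ?_⟩
    have hBimg : g '' B (χf i) = B i := by rw [hgB, hcf]
    constructor
    · rw [← hBimg, Cardinal.mk_image_eq g.injective]
    · refine ⟨g '' (f '' B i), ?_, ?_, ?_⟩
      · exact (Set.image_mono (f := g) (hχf i)).trans hBimg.subset
      · intro x hx
        refine ⟨g (f x), ⟨⟨f x, ⟨x, hx, rfl⟩, rfl⟩, hfgf x⟩, ?_⟩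
        rintro t ⟨⟨y, ⟨x', hx', rfl⟩, rfl⟩, hft⟩
        rw [hfgf x'] at hft
        rw [hft]
      · have : B i \ g '' (f '' B i) = g '' (B (χf i) \ f '' B i) := by
          rw [Set.image_diff g.injective, hBimg]
        rw [this, Cardinal.mk_image_eq g.injective]
  · -- backward direction
    rintro ⟨hsurj, h2⟩
    have h3 : ∀ i, ∃ T, T ⊆ B i ∧ (∀ x ∈ B i, ∃! t, t ∈ T ∧ f t = f x) ∧
        Cardinal.mk ↥(B i \ T) = Cardinal.mk ↥(B (χf i) \ f '' B i) :=
      fun i => (h2 i).2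
    choose T hT htrans hcard using h3
    set χ : I ≃ I := Equiv.ofBijective χf ⟨hinj, hsurj⟩ with hχ
    have hχapp : ∀ i, χ i = χf i := fun i => rfl
    -- block-wise equivalences
    have eTdef : ∀ i, Function.Bijective
        (fun t : ↥(T i) => (⟨f t, Set.mem_image_of_mem f (hT i t.2)⟩ : ↥(f '' B i))) := by
      intro i
      constructor
      · rintro ⟨t, ht⟩ ⟨t', ht'⟩ h
        have hf : f t = f t' := congrArg Subtype.val h
        obtain ⟨u, _, huniq⟩ := htrans i t (hT i ht)
        have e1 := huniq t ⟨ht, rfl⟩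
        have e2 := huniq t' ⟨ht', hf.symm⟩
        exact Subtype.ext (e1.trans e2.symm)
      · rintro ⟨y, x, hx, rfl⟩
        obtain ⟨t, ⟨htT, htf⟩, _⟩ := htrans i x hx
        exact ⟨⟨t, htT⟩, Subtype.ext htf⟩
    let eT : ∀ i, ↥(T i) ≃ ↥(f '' B i) := fun i => Equiv.ofBijective _ (eTdef i)
    let eD : ∀ i, ↥(B i \ T i) ≃ ↥(B (χf i) \ f '' B i) :=
      fun i => Classical.choice (Cardinal.eq.mp (hcard i))
    let F : ∀ i, ↥(B i) ≃ ↥(B (χf i)) := fun i =>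
      (Equiv.Set.sumDiffSubset (hT i)).symm.trans
        ((Equiv.sumCongr (eT i) (eD i)).trans (Equiv.Set.sumDiffSubset (hχf i)))
    -- key computation: F sends elements of T to their f-image
    have hFT : ∀ i (t : X) (htT : t ∈ T i) (hmem : f t ∈ B (χf i)),
        F i ⟨t, hT i htT⟩ = ⟨f t, hmem⟩ := by
      intro i t htT hmem
      show (Equiv.Set.sumDiffSubset (hχf i))
        ((Equiv.sumCongr (eT i) (eD i))
          ((Equiv.Set.sumDiffSubset (hT i)).symm ⟨t, hT i htT⟩)) = _
      rw [Equiv.Set.sumDiffSubset_symm_apply_of_mem (hT i) htT]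
      show (Equiv.Set.sumDiffSubset (hχf i)) (Sum.inl (eT i ⟨t, htT⟩)) = _
      rw [Equiv.Set.sumDiffSubset_apply_inl]
      rfl
    have hFkey : ∀ i (x : X) (hx : x ∈ B i) (hmem : f x ∈ B (χf i)),
        f (((F i).symm ⟨f x, hmem⟩ : ↥(B i)) : X) = f x := by
      intro i x hx hmem
      obtain ⟨t, ⟨htT, htf⟩, _⟩ := htrans i x hx
      have h1 : F i ⟨t, hT i htT⟩ = ⟨f x, hmem⟩ := by
        have := hFT i t htT (htf ▸ hmem)
        rw [this]
        exact Subtype.ext htf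
      rw [← h1, Equiv.symm_apply_apply]
      exact htf
    -- the index function
    have hι' : ∀ x : X, ∃ i, x ∈ B i := hcov
    choose ι hι using hι'
    have ιeq : ∀ {x : X} {i : I}, x ∈ B i → ι x = i := fun hx => blockEq (hι _) hx
    -- congruence helpers
    have Fcongr : ∀ {i j : I} (_ : i = j) (y : X) (hyi : y ∈ B i) (hyj : y ∈ B j),
        ((F i ⟨y, hyi⟩ : ↥(B (χf i))) : X) = ((F j ⟨y, hyj⟩ : ↥(B (χf j))) : X) := by
      rintro i j rfl y hyi hyj; rfl
    have Fscongr : ∀ {i j : I} (_ : i = j) (y : X) (hyi : y ∈ B (χf i)) (hyj : y ∈ B (χf j)),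
        (((F i).symm ⟨y, hyi⟩ : ↥(B i)) : X) = (((F j).symm ⟨y, hyj⟩ : ↥(B j)) : X) := by
      rintro i j rfl y hyi hyj; rfl
    -- build the unit g
    have memto : ∀ x : X, x ∈ B (χf (χ.symm (ι x))) := by
      intro x
      have : χf (χ.symm (ι x)) = ι x := χ.apply_symm_apply (ι x)
      rw [this]; exact hι x
    let gto : X → X := fun x => (((F (χ.symm (ι x))).symm ⟨x, memto x⟩ : ↥(B (χ.symm (ι x)))) : X)
    let gin : X → X := fun x => ((F (ι x) ⟨x, hι x⟩ : ↥(B (χf (ι x)))) : X)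
    have gtoMem : ∀ x : X, gto x ∈ B (χ.symm (ι x)) := fun x =>
      ((F (χ.symm (ι x))).symm ⟨x, memto x⟩).2
    have ginMem : ∀ x : X, gin x ∈ B (χf (ι x)) := fun x => (F (ι x) ⟨x, hι x⟩).2
    have left : ∀ x, gin (gto x) = x := by
      intro x
      show ((F (ι (gto x)) ⟨gto x, hι (gto x)⟩ : ↥(B (χf (ι (gto x))))) : X) = x
      have hιg : ι (gto x) = χ.symm (ι x) := ιeq (gtoMem x)
      rw [Fcongr hιg (gto x) (hι (gto x)) (gtoMem x)]
      have : (⟨gto x, gtoMem x⟩ : ↥(B (χ.symm (ι x)))) =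
          (F (χ.symm (ι x))).symm ⟨x, memto x⟩ := Subtype.ext rfl
      rw [this, Equiv.apply_symm_apply]
    have right : ∀ x, gto (gin x) = x := by
      intro x
      show (((F (χ.symm (ι (gin x)))).symm ⟨gin x, memto (gin x)⟩ :
          ↥(B (χ.symm (ι (gin x))))) : X) = x
      have hιg : χ.symm (ι (gin x)) = ι x := by
        rw [ιeq (ginMem x), ← hχapp, Equiv.symm_apply_apply]
      rw [Fscongr hιg (gin x) (memto (gin x)) (hιg ▸ ginMem x)]
      have : (⟨gin x, hιg ▸ ginMem x⟩ : ↥(B (χf (ι x)))) =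
          F (ι x) ⟨x, hι x⟩ := Subtype.ext rfl
      rw [this, Equiv.symm_apply_apply]
    let g : X ≃ X := ⟨gto, gin, left, right⟩
    refine ⟨g, ?_, ?_, ?_⟩
    · intro i
      refine ⟨χ.symm i, ?_⟩
      rintro y ⟨x, hx, rfl⟩
      have : ι x = i := ιeq hx
      show gto x ∈ B (χ.symm i)
      rw [← this]
      exact gtoMem x
    · intro i
      refine ⟨χf i, ?_⟩
      rintro y ⟨x, hx, rfl⟩
      have : ι x = i := ιeq hx
      show gin x ∈ B (χf i)
      rw [← this]
      exact ginMem x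
    · intro x
      show f (gto (f x)) = f x
      have hfx : f x ∈ B (χf (ι x)) := hχf _ ⟨x, hι x, rfl⟩
      have hιfx : χ.symm (ι (f x)) = ι x := by
        rw [ιeq hfx, ← hχapp, Equiv.symm_apply_apply]
      show f (((F (χ.symm (ι (f x)))).symm ⟨f x, memto (f x)⟩ :
          ↥(B (χ.symm (ι (f x))))) : X) = f x
      rw [Fscongr hιfx (f x) (memto (f x)) (hιfx ▸ memto (f x))]
      exact hFkey (ι x) x (hι x) _
end

section
/- Let 𝒫 = {X_i : i ∈ I} be a partition of X and Ω(X,𝒫) = {f ∈ T(X,𝒫) : f is injective on each block, i.e., x ≠ y and (x,y) ∈ E implies f(x) ≠ f(y)}. Then f ∈ Ω(X,𝒫) is regular in Ω(X,𝒫) (f = f g f for some g ∈ Ω(X,𝒫)) if and only if for every j in the image of χ^(f) there exists i ∈ I with χ^(f)(i) = j such that the induced block map f_i : X_i → X_j is surjective. -/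
/-- `f ∈ Ω(X,𝒫)` (preserving 𝒫 and injective on each block) is regular in
`Ω(X,𝒫)` iff for every `j` in the image of `χf` there is `i` with
`χf i = j` whose induced block map `f_i : X_i → X_j` is surjective. -/
theorem stmt_18 {X I : Type*} (B : I → Set X) (hP : IsBlockPartition B)
    (f : X → X) (χf : I → I) (hχf : ∀ i, f '' B i ⊆ B (χf i))
    (hinj : ∀ i, Set.InjOn f (B i)) :
    (∃ g : X → X, Preserves B g ∧ (∀ i, Set.InjOn g (B i)) ∧
        ∀ x, f (g (f x)) = f x) ↔
      ∀ j ∈ Set.range χf, ∃ i, χf i = j ∧ f '' B i = B j := by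
  classical
  constructor
  · rintro ⟨g, hpg, hginj, hfgf⟩ j ⟨i0, rfl⟩
    obtain ⟨i, hi⟩ := hpg (χf i0)
    obtain ⟨y, hy⟩ := hP.1 i0
    have hfy : f y ∈ B (χf i0) := hχf i0 ⟨y, hy, rfl⟩
    have hgfy : g (f y) ∈ B i := hi ⟨f y, hfy, rfl⟩
    have h1 : f (g (f y)) ∈ B (χf i) := hχf i ⟨_, hgfy, rfl⟩
    have h2 : f (g (f y)) ∈ B (χf i0) := by rw [hfgf]; exact hfy
    have hji : χf i = χf i0 := by
      by_contra hne
      exact Set.disjoint_left.mp (hP.2.1 _ _ hne) h1 h2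
    refine ⟨i, hji, Set.Subset.antisymm (hji ▸ hχf i) ?_⟩
    intro x hx
    have hgx : g x ∈ B i := hi ⟨x, hx, rfl⟩
    have hhx : f (g x) ∈ B (χf i0) := hji ▸ hχf i ⟨_, hgx, rfl⟩
    have hghx : g (f (g x)) ∈ B i := hi ⟨_, hhx, rfl⟩
    -- f (g (f (g x))) = f (g x)
    have e1 : f (g (f (g x))) = f (g x) := hfgf (g x)
    have e2 : g (f (g x)) = g x := hinj i hghx hgx e1
    have e3 : f (g x) = x := hginj (χf i0) hhx hx e2
    exact ⟨g x, hgx, e3⟩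
  · intro hsurj
    have hι : ∀ x, x ∈ B (Classical.choose (hP.2.2 x)) :=
      fun x => Classical.choose_spec (hP.2.2 x)
    set ι : X → I := fun x => Classical.choose (hP.2.2 x) with hιdef
    have hιu : ∀ {x : X} {j : I}, x ∈ B j → ι x = j := by
      intro x j hx
      by_contra hne
      exact Set.disjoint_left.mp (hP.2.1 _ _ hne) (hι x) hx
    set σ : I → I := fun j =>
      if h : ∃ i, χf i = j ∧ f '' B i = B j then Classical.choose h else j with hσdef
    have hσ : ∀ j, (∃ i, χf i = j ∧ f '' B i = B j) → f '' B (σ j) = B j := by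
      intro j h
      simp only [hσdef, dif_pos h]
      exact (Classical.choose_spec h).2
    have key : ∀ x : X, ∃ y : X,
        (f '' B (σ (ι x)) = B (ι x) → y ∈ B (σ (ι x)) ∧ f y = x) ∧
        (¬ f '' B (σ (ι x)) = B (ι x) → y = x) := by
      intro x
      by_cases hC : f '' B (σ (ι x)) = B (ι x)
      · have hx : x ∈ f '' B (σ (ι x)) := hC ▸ hι x
        obtain ⟨y, hy, hfy⟩ := hx
        exact ⟨y, fun _ => ⟨hy, hfy⟩, fun h => absurd hC h⟩
      · exact ⟨x, fun h => absurd h hC, fun _ => rfl⟩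
    set g : X → X := fun x => Classical.choose (key x) with hgdef
    have hgs : ∀ x : X,
        (f '' B (σ (ι x)) = B (ι x) → g x ∈ B (σ (ι x)) ∧ f (g x) = x) ∧
        (¬ f '' B (σ (ι x)) = B (ι x) → g x = x) :=
      fun x => Classical.choose_spec (key x)
    refine ⟨g, ?_, ?_, ?_⟩
    · intro j
      by_cases hC : f '' B (σ j) = B j
      · refine ⟨σ j, ?_⟩
        rintro _ ⟨x, hx, rfl⟩
        have h := (hgs x).1
        rw [hιu hx] at h
        exact (h hC).1
      · refine ⟨j, ?_⟩
        rintro _ ⟨x, hx, rfl⟩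
        have h := (hgs x).2
        rw [hιu hx] at h
        rw [h hC]; exact hx
    · intro j x hx y hy hxy
      by_cases hC : f '' B (σ j) = B j
      · have h1 := (hgs x).1; rw [hιu hx] at h1
        have h2 := (hgs y).1; rw [hιu hy] at h2
        rw [← (h1 hC).2, ← (h2 hC).2, hxy]
      · have h1 := (hgs x).2; rw [hιu hx] at h1
        have h2 := (hgs y).2; rw [hιu hy] at h2
        rw [← h1 hC, ← h2 hC, hxy]
    · intro x
      have hfx : f x ∈ B (χf (ι x)) := hχf (ι x) ⟨x, hι x, rfl⟩
      have hC : f '' B (σ (χf (ι x))) = B (χf (ι x)) :=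
        hσ _ (hsurj _ ⟨ι x, rfl⟩)
      have h := (hgs (f x)).1
      rw [hιu hfx] at h
      exact (h hC).2
end
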